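/- Let n be odd and let u be a necklace of length n of rank (n+1)/2 with Lyndon rearrangement w. Then w has exactly one unmatched position p, carrying a 1; the word obtained from w by changing position p to 0 (a representative of φ(u)) has the same matched pairs as w and has p as its unique unmatched position, now carrying a 0. Consequently, φ is injective on the set of necklaces of rank (n+1)/2: the preimage of φ(u) is recovered by changing the unique unmatched 0 back to a 1. -/

import Mathlib

/-!
Common definitions: binary words of length `n`, rotations, necklaces (the quotient
poset `Bₙ/Cₙ`), the cyclic matching procedure, Lyndon words, the map `φ`,
crossing pairs, and the words `w_t`.

Throughout, a binary word of length `n` is a function `Fin n → Bool`, where `true`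
encodes the letter `1` and `false` the letter `0`.
-/

/-- A binary word of length `n`: `true` encodes the letter `1`, `false` the letter `0`. -/
abbrev Word (n : ℕ) := Fin n → Bool

variable {n : ℕ} [NeZero n]

/-- The rotation `σ_i`, shifting the letters of `w` cyclically by `i` positions (so the
letter at position `j` of `w` appears at position `j + i` of `rot i w`). -/
def rot (i : Fin n) (w : Word n) : Word n := fun j => w (j - i)

lemma rot_rot (i j : Fin n) (w : Word n) : rot i (rot j w) = rot (j + i) w := by
  funext k
  simp [rot, sub_sub, add_comm]

/-- Two words are equivalent when one is a cyclic rotation of the other. -/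
def rotSetoid (n : ℕ) [NeZero n] : Setoid (Word n) where
  r w w' := ∃ i : Fin n, rot i w = w'
  iseqv := by
    refine ⟨fun w => ⟨0, ?_⟩, ?_, ?_⟩
    · funext j; simp [rot]
    · rintro w w' ⟨i, rfl⟩
      refine ⟨-i, ?_⟩
      rw [rot_rot]
      funext j; simp [rot]
    · rintro w w' w'' ⟨i, rfl⟩ ⟨j, rfl⟩
      exact ⟨i + j, (rot_rot j i w).symm⟩

/-- A necklace: an equivalence class of binary words under cyclic rotation. -/
abbrev Necklace (n : ℕ) [NeZero n] := Quotient (rotSetoid n)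

/-- The necklace of a word. -/
def nec (w : Word n) : Necklace n := Quotient.mk (rotSetoid n) w

/-- The number of `1`s in a word. -/
def wt (w : Word n) : ℕ := (Finset.univ.filter fun i => w i = true).card

/-- The number of `0`s in a word. -/
def zeros (w : Word n) : ℕ := (Finset.univ.filter fun i => w i = false).card

/-- The rank of a necklace: the number of `1`s in any representative. -/
noncomputable def rank (u : Necklace n) : ℕ := wt (Quotient.out u)

/-- The set of positions belonging to some pair of `M`. -/
def matchedPos (M : Finset (Fin n × Fin n)) : Finset (Fin n) :=
  M.image Prod.fst ∪ M.image Prod.snd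

/-- `j` is the first position outside `S` encountered strictly after `i` in the cyclic
order `i+1, i+2, …` (indices mod `n`). -/
def FirstAfter (S : Finset (Fin n)) (i j : Fin n) : Prop :=
  j ∉ S ∧ j ≠ i ∧ ∀ k : Fin n, k ∉ S → k ≠ i → (j - i).val ≤ (k - i).val

/-- One step of the cyclic matching procedure on the word `w`: choose an as-yet-unmatched
position `i` carrying the letter `0` such that the first as-yet-unmatched position `j`
after `i` in cyclic order carries the letter `1`, and declare `{i, j}` a matched pair
(recorded as the ordered pair `(i, j)`, the `0`-position first). -/
inductive MatchStep (w : Word n) :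
    Finset (Fin n × Fin n) → Finset (Fin n × Fin n) → Prop
  | step {M : Finset (Fin n × Fin n)} {i j : Fin n}
      (hi : i ∉ matchedPos M) (hw : w i = false)
      (hj : FirstAfter (matchedPos M) i j) (hj1 : w j = true) :
      MatchStep w M (insert (i, j) M)

/-- A maximal execution of the cyclic matching procedure on `w`, starting from the empty
matching: `M` is reachable from `∅` by matching steps and no further step is possible. -/
def IsMaximalMatching (w : Word n) (M : Finset (Fin n × Fin n)) : Prop :=
  Relation.ReflTransGen (MatchStep w) ∅ M ∧ ∀ M', ¬ MatchStep w M M'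

/-- The cyclic matching of `w`: the set of matched pairs produced by (any) maximal
execution of the cyclic matching procedure. -/
noncomputable def matching (w : Word n) : Finset (Fin n × Fin n) :=
  letI := Classical.dec (∃ M, IsMaximalMatching w M)
  if h : ∃ M, IsMaximalMatching w M then h.choose else ∅

/-- The unmatched positions of `w`: positions belonging to no matched pair. -/
noncomputable def unmatchedPos (w : Word n) : Finset (Fin n) :=
  Finset.univ \ matchedPos (matching w)

/-- Lexicographic comparison of words with respect to the letter order `1 ≺ 0`
(recall `true` encodes `1` and `false` encodes `0`). -/
def lexLE (w w' : Word n) : Prop :=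
  w = w' ∨ ∃ i : Fin n, (∀ j : Fin n, j < i → w j = w' j) ∧ w i = true ∧ w' i = false

/-- A word is Lyndon if it is lexicographically smallest among all of its rotations,
with respect to the letter order `1 ≺ 0`. -/
def IsLyndon (w : Word n) : Prop := ∀ i : Fin n, lexLE w (rot i w)

/-- The Lyndon rearrangement of `w`: its lexicographically smallest rotation. -/
noncomputable def lyndonOf (w : Word n) : Word n :=
  letI := Classical.dec (∃ i : Fin n, IsLyndon (rot i w))
  if h : ∃ i : Fin n, IsLyndon (rot i w) then rot h.choose w else w

/-- Change the letter at the rightmost unmatched position of `w` to `0`. -/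
noncomputable def flipTop (w : Word n) : Word n :=
  if h : (unmatchedPos w).Nonempty then
    Function.update w ((unmatchedPos w).max' h) false
  else w

/-- The map `φ`: take the Lyndon rearrangement of a representative and change the letter
at its rightmost unmatched position (which carries a `1` on the upper half of ranks)
to `0`. -/
noncomputable def phi (u : Necklace n) : Necklace n :=
  nec (flipTop (lyndonOf (Quotient.out u)))

/-- `x` lies strictly inside the cyclic arc running from `i` (exclusive) to `k`
(exclusive), in the cyclic order of positions. -/
def StrictBtw (i x k : Fin n) : Prop :=
  0 < (x - i).val ∧ (x - i).val < (k - i).val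

/-- The pairs `{i, k}` and `{j, l}` cross: exactly one of `j, l` lies strictly inside one
of the two cyclic arcs determined by `i` and `k`. -/
def Crosses (i k j l : Fin n) : Prop := Xor' (StrictBtw i j k) (StrictBtw i l k)

/-- `wT w t` is the word obtained from `w` by changing the letters at the last `t`
unmatched positions of `w` to `0`; that is, if the unmatched positions of `w` are
`p₁ < … < p_m`, the positions `p_{m-t+1}, …, p_m` are changed to `0`. -/
noncomputable def wT (w : Word n) (t : ℕ) : Word n := fun j =>
  if j ∈ unmatchedPos w ∧ ((unmatchedPos w).filter fun k => j ≤ k).card ≤ t then false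
  else w j

/-- The order on necklaces (the poset `Bₙ/Cₙ`): `u ≤ v` iff there are representatives
`w` of `u` and `w'` of `v` such that every position carrying `1` in `w` also carries `1`
in `w'`. -/
def nle (u v : Necklace n) : Prop :=
  ∃ w w' : Word n, nec w = u ∧ nec w' = v ∧ ∀ i, w i = true → w' i = true

/-- The strict order on necklaces. -/
def nlt (u v : Necklace n) : Prop := nle u v ∧ u ≠ v

/-- `v` covers `u` in `Bₙ/Cₙ`: `u < v` and there is no `z` with `u < z < v`. -/
def ncovBy (u v : Necklace n) : Prop := nlt u v ∧ ∀ z, nlt u z → ¬ nlt z v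

/-- A chain top: a necklace `v` in the upper half of ranks (`2·rank v ≥ n`) which is not
the image under `φ` of any necklace in the strict upper half of ranks. -/
def IsChainTop (v : Necklace n) : Prop :=
  n ≤ 2 * rank v ∧ ∀ u : Necklace n, n < 2 * rank u → phi u ≠ v

/-- The `φ`-string below the chain top `v`: the necklaces of the words `w_t`,
`0 ≤ t ≤ m`, where `w` is the Lyndon representative of `v` and `m = 2·rank v − n`. -/
noncomputable def chainOf (v : Necklace n) : Set (Necklace n) :=
  { u | ∃ t ≤ 2 * rank v - n, u = nec (wT (lyndonOf (Quotient.out v)) t) }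

/-! ### Auxiliary lemmas -/

open Finset Relation

section AuxLemmas

/-! #### Fin arithmetic -/

lemma fin_sub_pos {a b : Fin n} (h : a ≠ b) : 0 < (a - b).val := by
  rcases Nat.eq_zero_or_pos (a - b).val with h0 | h0
  · have : a - b = 0 := Fin.ext (by simp [h0])
    exact absurd (sub_eq_zero.mp this) h
  · exact h0

lemma fin_sub_sub_val {z j q : Fin n} (h : (j - z).val ≤ (q - z).val) :
    (q - j).val = (q - z).val - (j - z).val := by
  have e : q - j = (q - z) - (j - z) := by abel
  rw [e, Fin.sub_val_of_le h]

lemma fin_sub_add_sub {a b : Fin n} (h : a ≠ b) : (a - b).val + (b - a).val = n := by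
  have h1 : ((a - b) + (b - a)).val = ((a - b).val + (b - a).val) % n := by
    rw [Fin.add_def]
  have h2 : (a - b) + (b - a) = 0 := by abel
  rw [h2] at h1
  have p1 : 0 < (a - b).val := fin_sub_pos h
  have p2 : 0 < (b - a).val := fin_sub_pos (Ne.symm h)
  have l1 : (a - b).val < n := (a - b).isLt
  have l2 : (b - a).val < n := (b - a).isLt
  have hz : ((a - b).val + (b - a).val) % n = 0 := by simpa using h1.symm
  obtain ⟨k, hk⟩ := Nat.dvd_of_mod_eq_zero hz
  have hk2 : k < 2 := by
    by_contra hc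
    have : n * 2 ≤ n * k := Nat.mul_le_mul_left n (by omega)
    omega
  interval_cases k <;> omega

/-! #### Rotations -/

lemma rot_zero (w : Word n) : rot 0 w = w := by
  funext j; simp [rot]

lemma nec_rot (i : Fin n) (w : Word n) : nec (rot i w) = nec w := by
  unfold nec
  refine (Quotient.sound ?_).symm
  exact ⟨i, rfl⟩

lemma wt_rot (i : Fin n) (w : Word n) : wt (rot i w) = wt w := by
  rw [wt, wt]
  have himg : (Finset.univ.filter fun j => rot i w j = true)
      = (Finset.univ.filter fun j => w j = true).image (· + i) := by
    ext x
    simp only [mem_filter, mem_univ, true_and, mem_image]; simp only [rot]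
    constructor
    · intro hx; exact ⟨x - i, hx, sub_add_cancel x i⟩
    · rintro ⟨a, ha, rfl⟩; rwa [add_sub_cancel_right]
  rw [himg, Finset.card_image_of_injective _ (add_left_injective i)]

lemma nec_lyndonOf (w : Word n) : nec (lyndonOf w) = nec w := by
  unfold lyndonOf
  split
  · exact nec_rot _ _
  · rfl

lemma wt_lyndonOf (w : Word n) : wt (lyndonOf w) = wt w := by
  unfold lyndonOf
  split
  · exact wt_rot _ _
  · rfl


/-! #### Basic facts about matching steps -/

lemma matchedPos_insert (i j : Fin n) (M : Finset (Fin n × Fin n)) :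
    matchedPos (insert (i, j) M) = insert i (insert j (matchedPos M)) := by
  ext x
  simp only [matchedPos, mem_union, mem_image, mem_insert, Prod.exists]
  constructor
  · rintro (⟨a, b, hab, rfl⟩ | ⟨a, b, hab, rfl⟩) <;>
      rcases hab with hab | hab
    · exact Or.inl (congrArg Prod.fst hab)
    · exact Or.inr (Or.inr (Or.inl ⟨a, b, hab, rfl⟩))
    · exact Or.inr (Or.inl (congrArg Prod.snd hab))
    · exact Or.inr (Or.inr (Or.inr ⟨a, b, hab, rfl⟩))
  · rintro (rfl | rfl | ⟨a, b, hab, rfl⟩ | ⟨a, b, hab, rfl⟩)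
    · exact Or.inl ⟨x, j, Or.inl rfl, rfl⟩
    · exact Or.inr ⟨i, x, Or.inl rfl, rfl⟩
    · exact Or.inl ⟨a, b, Or.inr hab, rfl⟩
    · exact Or.inr ⟨a, b, Or.inr hab, rfl⟩

/-- The invariant maintained by the matching procedure. -/
def MInv (w : Word n) (M : Finset (Fin n × Fin n)) : Prop :=
  (∀ p ∈ M, w p.1 = false ∧ w p.2 = true) ∧
  (M.image Prod.fst).card = M.card ∧ (M.image Prod.snd).card = M.card

lemma minv_step {w : Word n} {M M' : Finset (Fin n × Fin n)}
    (h : MatchStep w M M') (hI : MInv w M) : MInv w M' := by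
  cases h with
  | @step i j hi hw hj hj1 =>
    have hif : i ∉ M.image Prod.fst := fun hm => hi (mem_union_left _ hm)
    have hjs : j ∉ M.image Prod.snd := fun hm => hj.1 (mem_union_right _ hm)
    have hij : (i, j) ∉ M := fun hm => hif (mem_image_of_mem _ hm)
    refine ⟨?_, ?_, ?_⟩
    · intro p hp
      rcases mem_insert.mp hp with rfl | hp
      · exact ⟨hw, hj1⟩
      · exact hI.1 p hp
    · rw [image_insert, card_insert_of_notMem hif, card_insert_of_notMem hij, hI.2.1]
    · rw [image_insert, card_insert_of_notMem hjs, card_insert_of_notMem hij, hI.2.2]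

lemma minv_reach {w : Word n} {M : Finset (Fin n × Fin n)}
    (h : Relation.ReflTransGen (MatchStep w) ∅ M) : MInv w M := by
  induction h with
  | refl => exact ⟨by simp, by simp, by simp⟩
  | tail _ hstep ih => exact minv_step hstep ih

lemma card_matchedPos {w : Word n} {M : Finset (Fin n × Fin n)} (hI : MInv w M) :
    (matchedPos M).card = 2 * M.card := by
  have hdisj : Disjoint (M.image Prod.fst) (M.image Prod.snd) := by
    rw [Finset.disjoint_left]
    intro x hx hx'
    obtain ⟨a, ha, rfl⟩ := mem_image.mp hx
    obtain ⟨b, hb, hba⟩ := mem_image.mp hx'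
    have h1 := (hI.1 a ha).1
    have h2 := (hI.1 b hb).2
    rw [hba, h1] at h2
    cases h2
  rw [matchedPos, card_union_of_disjoint hdisj, hI.2.1, hI.2.2]
  omega

lemma step_card {w : Word n} {M M' : Finset (Fin n × Fin n)} (h : MatchStep w M M') :
    M.card < M'.card := by
  cases h with
  | @step i j hi hw hj hj1 =>
    have hij : (i, j) ∉ M := fun hm =>
      hi (mem_union_left _ (mem_image_of_mem _ hm))
    rw [card_insert_of_notMem hij]
    omega

lemma exists_maximal (w : Word n) : ∃ M, IsMaximalMatching w M := by
  classical
  set R : Finset (Finset (Fin n × Fin n)) :=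
    Finset.univ.filter (fun M => Relation.ReflTransGen (MatchStep w) ∅ M) with hR
  have hne : R.Nonempty :=
    ⟨∅, mem_filter.mpr ⟨mem_univ _, Relation.ReflTransGen.refl⟩⟩
  obtain ⟨M, hM, hmax⟩ := R.exists_max_image Finset.card hne
  have hMr : Relation.ReflTransGen (MatchStep w) ∅ M := (mem_filter.mp hM).2
  refine ⟨M, hMr, fun M' hs => ?_⟩
  have hM' : M' ∈ R := mem_filter.mpr ⟨mem_univ _, hMr.tail hs⟩
  exact absurd (hmax M' hM') (not_le.mpr (step_card hs))

/-! #### Uniqueness of the maximal matching -/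

lemma firstAfter_unique {S : Finset (Fin n)} {i j j' : Fin n}
    (h : FirstAfter S i j) (h' : FirstAfter S i j') : j = j' := by
  have h1 := h.2.2 j' h'.1 h'.2.1
  have h2 := h'.2.2 j h.1 h.2.1
  have : j - i = j' - i := Fin.val_injective (le_antisymm h1 h2)
  exact sub_left_inj.mp this

lemma step_diamond {w : Word n} {M M₁ M₂ : Finset (Fin n × Fin n)}
    (h1 : MatchStep w M M₁) (h2 : MatchStep w M M₂) :
    M₁ = M₂ ∨ ∃ M₃, MatchStep w M₁ M₃ ∧ MatchStep w M₂ M₃ := by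
  cases h1 with
  | @step i j hi hw hj hj1 =>
  cases h2 with
  | @step i' j' hi' hw' hj' hj1' =>
  by_cases hii : i = i'
  · subst hii
    have := firstAfter_unique hj hj'
    subst this
    exact Or.inl rfl
  · right
    have hji' : j ≠ i' := fun h => by rw [h, hw'] at hj1; cases hj1
    have hj'i : j' ≠ i := fun h => by rw [h, hw] at hj1'; cases hj1'
    have hjj' : j ≠ j' := by
      intro h
      subst h
      have d1 : (j - i).val ≤ (i' - i).val := hj.2.2 i' hi' (Ne.symm hii)
      have d1' : (j - i).val ≠ (i' - i).val := fun h =>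
        hji' (sub_left_inj.mp (Fin.val_injective h))
      have d2 : (j - i').val ≤ (i - i').val := hj'.2.2 i hi hii
      have e1 : (i' - j).val = (i' - i).val - (j - i).val :=
        fin_sub_sub_val (le_of_lt (lt_of_le_of_ne d1 d1'))
      have e2 : (j - i').val + (i' - j).val = n := fin_sub_add_sub hji'
      have e3 : (i - i').val + (i' - i).val = n := fin_sub_add_sub hii
      have p1 : 0 < (j - i).val := fin_sub_pos hj.2.1
      have p2 : 0 < (i' - i).val := fin_sub_pos (Ne.symm hii)
      omega
    refine ⟨insert (i', j') (insert (i, j) M), ?_, ?_⟩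
    · refine MatchStep.step ?_ hw' ⟨?_, hj'.2.1, ?_⟩ hj1'
      · rw [matchedPos_insert]
        simp only [mem_insert]
        push_neg
        exact ⟨Ne.symm hii, Ne.symm hji', hi'⟩
      · rw [matchedPos_insert]
        simp only [mem_insert]
        push_neg
        exact ⟨hj'i, Ne.symm hjj', hj'.1⟩
      · intro k hk hki'
        rw [matchedPos_insert] at hk
        simp only [mem_insert] at hk
        push_neg at hk
        exact hj'.2.2 k hk.2.2 hki'
    · rw [Finset.insert_comm]
      refine MatchStep.step ?_ hw ⟨?_, hj.2.1, ?_⟩ hj1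
      · rw [matchedPos_insert]
        simp only [mem_insert]
        push_neg
        exact ⟨hii, fun h => hj'i h.symm, hi⟩
      · rw [matchedPos_insert]
        simp only [mem_insert]
        push_neg
        exact ⟨fun h => hji' (h ▸ rfl), hjj', hj.1⟩
      · intro k hk hki
        rw [matchedPos_insert] at hk
        simp only [mem_insert] at hk
        push_neg at hk
        exact hj.2.2 k hk.2.2 hki

lemma matching_unique {w : Word n} {M₁ M₂ : Finset (Fin n × Fin n)}
    (h1 : IsMaximalMatching w M₁) (h2 : IsMaximalMatching w M₂) : M₁ = M₂ := by
  have cr := Relation.church_rosser (r := MatchStep w) ?_ h1.1 h2.1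
  · obtain ⟨c, hc1, hc2⟩ := cr
    have e1 : M₁ = c := by
      rcases hc1.cases_head with rfl | ⟨d, hd, _⟩
      · rfl
      · exact absurd hd (h1.2 d)
    have e2 : M₂ = c := by
      rcases hc2.cases_head with rfl | ⟨d, hd, _⟩
      · rfl
      · exact absurd hd (h2.2 d)
    rw [e1, e2]
  · intro a b c hab hac
    rcases step_diamond hab hac with rfl | ⟨d, hd1, hd2⟩
    · exact ⟨b, Relation.ReflGen.refl, Relation.ReflTransGen.refl⟩
    · exact ⟨d, Relation.ReflGen.single hd1, Relation.ReflTransGen.single hd2⟩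

lemma matching_isMax (w : Word n) : IsMaximalMatching w (matching w) := by
  rw [matching, dif_pos (exists_maximal w)]
  exact (exists_maximal w).choose_spec

lemma matching_eq {w : Word n} {M : Finset (Fin n × Fin n)}
    (h : IsMaximalMatching w M) : matching w = M :=
  matching_unique (matching_isMax w) h


/-! #### Unmatched positions on the middle rank -/

lemma exists_firstAfter {S : Finset (Fin n)} {i q : Fin n} (hq : q ∉ S) (hqi : q ≠ i) :
    ∃ j, FirstAfter S i j := by
  classical
  set C : Finset (Fin n) := Finset.univ.filter (fun k => k ∉ S ∧ k ≠ i) with hC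
  have hqC : q ∈ C := mem_filter.mpr ⟨mem_univ _, hq, hqi⟩
  obtain ⟨j, hjC, hmin⟩ := C.exists_min_image (fun k => (k - i).val) ⟨q, hqC⟩
  have hj := (mem_filter.mp hjC).2
  exact ⟨j, hj.1, hj.2, fun k hk hki =>
    hmin k (mem_filter.mpr ⟨mem_univ _, hk, hki⟩)⟩

lemma maximal_mono {w : Word n} {M : Finset (Fin n × Fin n)}
    (hmax : ∀ M', ¬ MatchStep w M M')
    {q : Fin n} (hq : q ∉ matchedPos M) (hqt : w q = true) :
    ∀ z, z ∉ matchedPos M → w z = true := by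
  intro z hz
  by_contra hzf
  rw [Bool.not_eq_true] at hzf
  classical
  set Z : Finset (Fin n) :=
    Finset.univ.filter (fun k => k ∉ matchedPos M ∧ w k = false) with hZ
  have hzZ : z ∈ Z := mem_filter.mpr ⟨mem_univ _, hz, hzf⟩
  obtain ⟨z₀, hz₀Z, hz₀min⟩ := Z.exists_min_image (fun k => (q - k).val) ⟨z, hzZ⟩
  have hz₀ := (mem_filter.mp hz₀Z).2
  have hqz₀ : q ≠ z₀ := fun h => by rw [h, hz₀.2] at hqt; cases hqt
  obtain ⟨j, hjF⟩ := exists_firstAfter (S := matchedPos M) (i := z₀) hq hqz₀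
  cases hjw : w j with
  | true => exact hmax _ (MatchStep.step hz₀.1 hz₀.2 hjF hjw)
  | false =>
    have hjq : j ≠ q := fun h => by rw [h, hqt] at hjw; cases hjw
    have hle : (j - z₀).val ≤ (q - z₀).val := hjF.2.2 q hq hqz₀
    have hlt : (j - z₀).val < (q - z₀).val :=
      lt_of_le_of_ne hle (fun h => hjq (sub_left_inj.mp (Fin.val_injective h)))
    have hpos : 0 < (j - z₀).val := fin_sub_pos hjF.2.1
    have heq : (q - j).val = (q - z₀).val - (j - z₀).val := fin_sub_sub_val hle
    have hjZ : j ∈ Z := mem_filter.mpr ⟨mem_univ _, hjF.1, hjw⟩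
    have := hz₀min j hjZ
    omega

lemma wt_add_card_false (w : Word n) :
    wt w + (Finset.univ.filter fun k => w k = false).card = n := by
  classical
  have hfilter : (Finset.univ.filter fun k => w k = false)
      = Finset.univ.filter (fun k => ¬ (w k = true)) := by
    ext k
    cases h : w k <;> simp [h]
  rw [wt, hfilter, Finset.card_filter_add_card_filter_not, card_univ,
    Fintype.card_fin]

lemma unmatched_singleton {w : Word n} (hw : 2 * wt w = n + 1) :
    ∃ p, unmatchedPos w = {p} ∧ w p = true := by
  classical
  obtain ⟨hreach, hmax⟩ := matching_isMax w
  have hI := minv_reach hreach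
  set M := matching w with hM
  set F : Finset (Fin n) := Finset.univ.filter (fun k => w k = false) with hF
  set T : Finset (Fin n) := Finset.univ.filter (fun k => w k = true) with hT
  have hTcard : T.card = wt w := rfl
  have hsubF : M.image Prod.fst ⊆ F := by
    intro x hx
    obtain ⟨a, ha, rfl⟩ := mem_image.mp hx
    exact mem_filter.mpr ⟨mem_univ _, (hI.1 a ha).1⟩
  have hsubT : M.image Prod.snd ⊆ T := by
    intro x hx
    obtain ⟨a, ha, rfl⟩ := mem_image.mp hx
    exact mem_filter.mpr ⟨mem_univ _, (hI.1 a ha).2⟩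
  have hFcard : wt w + F.card = n := wt_add_card_false w
  have hMle : M.card ≤ F.card := by
    rw [← hI.2.1]; exact card_le_card hsubF
  have hMlt : M.card < T.card := by rw [hTcard]; omega
  -- an unmatched position carrying 1
  have hTns : ¬ T ⊆ M.image Prod.snd := fun hc => by
    have := card_le_card hc
    rw [hI.2.2] at this
    omega
  obtain ⟨q, hqT, hqs⟩ := Finset.not_subset.mp hTns
  have hqt : w q = true := (mem_filter.mp hqT).2
  have hqf : q ∉ M.image Prod.fst := fun hc => by
    obtain ⟨a, ha, rfl⟩ := mem_image.mp hc
    rw [(hI.1 a ha).1] at hqt; cases hqt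
  have hqM : q ∉ matchedPos M := by
    rw [matchedPos, mem_union]; tauto
  have hmono := maximal_mono hmax hqM hqt
  -- every 0 is matched
  have hFsub : F ⊆ M.image Prod.fst := by
    intro x hx
    have hxf : w x = false := (mem_filter.mp hx).2
    have hxM : x ∈ matchedPos M := by
      by_contra hc
      rw [hmono x hc] at hxf; cases hxf
    rw [matchedPos, mem_union] at hxM
    rcases hxM with h | h
    · exact h
    · obtain ⟨a, ha, rfl⟩ := mem_image.mp h
      rw [(hI.1 a ha).2] at hxf; cases hxf
  have hFeq : M.image Prod.fst = F := Finset.Subset.antisymm hsubF hFsub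
  have hMcard : M.card = F.card := by rw [← hI.2.1, hFeq]
  have hcardU : (unmatchedPos w).card = 1 := by
    rw [unmatchedPos, card_sdiff_of_subset (subset_univ _), card_univ, Fintype.card_fin,
      ← hM, card_matchedPos hI]
    omega
  obtain ⟨p, hp⟩ := Finset.card_eq_one.mp hcardU
  refine ⟨p, hp, ?_⟩
  have hpU : p ∈ unmatchedPos w := hp ▸ Finset.mem_singleton_self p
  rw [unmatchedPos, mem_sdiff, ← hM] at hpU
  exact hmono p hpU.2

/-! #### Flipping the unique unmatched position -/

lemma flip_preserves {w : Word n} {p : Fin n} (hp : unmatchedPos w = {p}) :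
    IsMaximalMatching (Function.update w p false) (matching w) := by
  obtain ⟨hreach, hmax⟩ := matching_isMax w
  have hpM : p ∉ matchedPos (matching w) := by
    have hpU : p ∈ unmatchedPos w := hp ▸ Finset.mem_singleton_self p
    rw [unmatchedPos, mem_sdiff] at hpU
    exact hpU.2
  constructor
  · have key : ∀ B, Relation.ReflTransGen (MatchStep w) ∅ B → B ⊆ matching w →
        Relation.ReflTransGen (MatchStep (Function.update w p false)) ∅ B := by
      intro B hB
      induction hB with
      | refl => intro _; exact Relation.ReflTransGen.refl
      | tail hAB hstep ih =>
        intro hsub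
        cases hstep with
        | @step i j hi hiw hj hj1 =>
          have hijM : (i, j) ∈ matching w := hsub (mem_insert_self _ _)
          have hip : i ≠ p := fun h =>
            hpM (h ▸ mem_union_left _ (mem_image_of_mem _ hijM))
          have hjp : j ≠ p := fun h =>
            hpM (h ▸ mem_union_right _ (mem_image_of_mem _ hijM))
          have hA : _ ⊆ matching w := (Finset.subset_insert _ _).trans hsub
          exact (ih hA).tail
            (MatchStep.step hi (by rwa [Function.update_of_ne hip]) hj
              (by rwa [Function.update_of_ne hjp]))
    exact key _ hreach Finset.Subset.rfl
  · intro M' hstep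
    cases hstep with
    | @step i j hi hiw hj hj1 =>
      have hU : ∀ x, x ∉ matchedPos (matching w) → x = p := by
        intro x hx
        have : x ∈ unmatchedPos w := by
          rw [unmatchedPos, mem_sdiff]; exact ⟨mem_univ x, hx⟩
        rw [hp] at this
        exact Finset.mem_singleton.mp this
      exact hj.2.1 ((hU j hj.1).trans (hU i hi).symm)

/-! #### Rotation equivariance of the matching -/

/-- Shift both coordinates of a pair by `r`. -/
def shiftPair (r : Fin n) (p : Fin n × Fin n) : Fin n × Fin n := (p.1 + r, p.2 + r)

lemma matchedPos_image_shift (r : Fin n) (M : Finset (Fin n × Fin n)) :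
    matchedPos (M.image (shiftPair r)) = (matchedPos M).image (· + r) := by
  rw [matchedPos, matchedPos, Finset.image_union, Finset.image_image,
    Finset.image_image, Finset.image_image, Finset.image_image]
  rfl

lemma mem_image_add {S : Finset (Fin n)} {x r : Fin n} :
    x + r ∈ S.image (· + r) ↔ x ∈ S := by
  constructor
  · intro h
    obtain ⟨y, hy, he⟩ := mem_image.mp h
    rwa [add_left_injective r he] at hy
  · exact fun h => mem_image_of_mem _ h

lemma firstAfter_shift {S : Finset (Fin n)} {i j : Fin n} (r : Fin n)
    (h : FirstAfter S i j) : FirstAfter (S.image (· + r)) (i + r) (j + r) := by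
  obtain ⟨h1, h2, h3⟩ := h
  refine ⟨fun hm => h1 (mem_image_add.mp hm), fun he => h2 (add_right_cancel he), ?_⟩
  intro k hk hki
  have hk' : k - r ∉ S := fun hm => hk (by
    have := mem_image_of_mem (· + r) hm
    simpa using this)
  have hki' : k - r ≠ i := fun he => hki (by rw [← he, sub_add_cancel])
  have e1 : j + r - (i + r) = j - i := by abel
  have e2 : k - (i + r) = k - r - i := by abel
  rw [e1, e2]
  exact h3 (k - r) hk' hki'

lemma step_shift {w : Word n} {M M' : Finset (Fin n × Fin n)} (r : Fin n)
    (h : MatchStep w M M') :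
    MatchStep (rot r w) (M.image (shiftPair r)) (M'.image (shiftPair r)) := by
  cases h with
  | @step i j hi hw hj hj1 =>
    have hrot : ∀ x : Fin n, rot r w (x + r) = w x := fun x => by
      simp [rot, add_sub_cancel_right]
    rw [Finset.image_insert]
    exact MatchStep.step (i := i + r) (j := j + r)
      (by rw [matchedPos_image_shift]; exact fun hm => hi (mem_image_add.mp hm))
      (by rw [hrot]; exact hw)
      (by rw [matchedPos_image_shift]; exact firstAfter_shift r hj)
      (by rw [hrot]; exact hj1)

lemma image_shift_shift (r : Fin n) (M : Finset (Fin n × Fin n)) :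
    (M.image (shiftPair r)).image (shiftPair (-r)) = M := by
  rw [Finset.image_image]
  have hcomp : shiftPair (-r) ∘ shiftPair r = id := by
    funext p
    simp [shiftPair]
  rw [hcomp, Finset.image_id]

lemma isMax_shift {w : Word n} {M : Finset (Fin n × Fin n)} (r : Fin n)
    (h : IsMaximalMatching w M) :
    IsMaximalMatching (rot r w) (M.image (shiftPair r)) := by
  constructor
  · have : ∀ B, Relation.ReflTransGen (MatchStep w) ∅ B →
        Relation.ReflTransGen (MatchStep (rot r w)) ∅ (B.image (shiftPair r)) := by
      intro B hB
      induction hB with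
      | refl => rw [Finset.image_empty]
      | tail _ hstep ih => exact ih.tail (step_shift r hstep)
    exact this _ h.1
  · intro M'' hstep
    have h2 := step_shift (-r) hstep
    rw [rot_rot, add_neg_cancel, rot_zero, image_shift_shift] at h2
    exact h.2 _ h2

lemma matching_rot (r : Fin n) (w : Word n) :
    matching (rot r w) = (matching w).image (shiftPair r) :=
  matching_eq (isMax_shift r (matching_isMax w))

lemma unmatchedPos_rot (r : Fin n) (w : Word n) :
    unmatchedPos (rot r w) = (unmatchedPos w).image (· + r) := by
  have huniv : (Finset.univ : Finset (Fin n)).image (· + r) = Finset.univ := by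
    ext x
    simp only [mem_image, mem_univ, iff_true]
    exact ⟨x - r, by simp⟩
  rw [unmatchedPos, unmatchedPos, matching_rot, matchedPos_image_shift,
    Finset.image_sdiff _ _ (add_left_injective r), huniv]


lemma nec_update_eq_phi {u : Necklace n} {p : Fin n}
    (hp : unmatchedPos (lyndonOf (Quotient.out u)) = {p}) :
    nec (Function.update (lyndonOf (Quotient.out u)) p false) = phi u := by
  have hne : (unmatchedPos (lyndonOf (Quotient.out u))).Nonempty := by
    rw [hp]; exact Finset.singleton_nonempty p
  have hmax' : (unmatchedPos (lyndonOf (Quotient.out u))).max' hne = p := by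
    apply Finset.mem_singleton.mp
    rw [← hp]
    exact Finset.max'_mem _ hne
  unfold phi flipTop
  rw [dif_pos hne, hmax']

end AuxLemmas
/-- Let `n` be odd and `u` a necklace of rank `(n+1)/2` with Lyndon
rearrangement `w`.  Then `w` has exactly one unmatched position `p`, carrying a `1`; the
word obtained from `w` by changing position `p` to `0` (a representative of `φ(u)`) has
the same matched pairs as `w` and has `p` as its unique unmatched position, now carrying
a `0`.  Consequently `φ` is injective on the necklaces of rank `(n+1)/2`. -/
theorem phi_injective_middle_ranks (n : ℕ) [NeZero n] (hodd : Odd n)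
    (u : Necklace n) (hu : 2 * rank u = n + 1) :
    (∃ p : Fin n,
      unmatchedPos (lyndonOf (Quotient.out u)) = {p} ∧
      lyndonOf (Quotient.out u) p = true ∧
      matching (Function.update (lyndonOf (Quotient.out u)) p false) =
        matching (lyndonOf (Quotient.out u)) ∧
      unmatchedPos (Function.update (lyndonOf (Quotient.out u)) p false) = {p} ∧
      Function.update (lyndonOf (Quotient.out u)) p false p = false ∧
      nec (Function.update (lyndonOf (Quotient.out u)) p false) = phi u) ∧
    (∀ u' : Necklace n, 2 * rank u' = n + 1 → phi u' = phi u → u' = u) := by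
  classical
  have hwt : 2 * wt (lyndonOf (Quotient.out u)) = n + 1 := by
    rw [wt_lyndonOf]; exact hu
  obtain ⟨p, hpU, hpt⟩ := unmatched_singleton hwt
  have hmatchflip : matching (Function.update (lyndonOf (Quotient.out u)) p false)
      = matching (lyndonOf (Quotient.out u)) := matching_eq (flip_preserves hpU)
  have hUflip : unmatchedPos (Function.update (lyndonOf (Quotient.out u)) p false) = {p} := by
    unfold unmatchedPos
    rw [hmatchflip]
    exact hpU
  refine ⟨⟨p, hpU, hpt, hmatchflip, hUflip, by simp,
    nec_update_eq_phi hpU⟩, ?_⟩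
  intro u' hu' heq
  have hwt' : 2 * wt (lyndonOf (Quotient.out u')) = n + 1 := by
    rw [wt_lyndonOf]; exact hu'
  obtain ⟨p₁, hp₁U, hp₁t⟩ := unmatched_singleton hwt'
  have hv : nec (Function.update (lyndonOf (Quotient.out u')) p₁ false)
      = nec (Function.update (lyndonOf (Quotient.out u)) p false) := by
    rw [nec_update_eq_phi hp₁U, nec_update_eq_phi hpU, heq]
  obtain ⟨r, hr⟩ := Quotient.exact hv
  have hUimg := unmatchedPos_rot r (Function.update (lyndonOf (Quotient.out u')) p₁ false)
  rw [hr] at hUimg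
  have hUflip' : unmatchedPos (Function.update (lyndonOf (Quotient.out u')) p₁ false)
      = {p₁} := by
    unfold unmatchedPos
    rw [matching_eq (flip_preserves hp₁U)]
    exact hp₁U
  rw [hUflip, hUflip', Finset.image_singleton] at hUimg
  have hpr : p = p₁ + r := Finset.singleton_injective hUimg
  have hrw : rot r (lyndonOf (Quotient.out u')) = lyndonOf (Quotient.out u) := by
    funext j
    by_cases hj : j = p
    · have hps : j - r = p₁ := by rw [hj, hpr, add_sub_cancel_right]
      show (lyndonOf (Quotient.out u')) (j - r) = lyndonOf (Quotient.out u) j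
      rw [hps, hp₁t, hj, hpt]
    · have h1 : j - r ≠ p₁ := fun he => hj (by rw [hpr, ← he, sub_add_cancel])
      have h2 := congrFun hr j
      show (lyndonOf (Quotient.out u')) (j - r) = lyndonOf (Quotient.out u) j
      rw [show rot r (Function.update (lyndonOf (Quotient.out u')) p₁ false) j
          = Function.update (lyndonOf (Quotient.out u')) p₁ false (j - r) from rfl] at h2
      rw [Function.update_of_ne h1] at h2
      rw [Function.update_of_ne hj] at h2
      exact h2
  calc u' = nec (lyndonOf (Quotient.out u')) := by
        rw [nec_lyndonOf]; exact (Quotient.out_eq u').symm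
    _ = nec (rot r (lyndonOf (Quotient.out u'))) := (nec_rot _ _).symm
    _ = nec (lyndonOf (Quotient.out u)) := by rw [hrw]
    _ = u := by rw [nec_lyndonOf]; exact Quotient.out_eq u
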